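/- Let n ≥ 1 and let σ : ℤ^n → ℂ satisfy the toroidal symbol estimates of order 0 and be 0-homogeneous on the lattice, i.e. σ(rℓ) = σ(ℓ) for every ℓ ∈ ℤ^n ∖ {0} and every positive integer r. Let f : ℝ^n ∖ {0} → ℂ be a continuously differentiable function which is 0-homogeneous (f(tξ) = f(ξ) for all t > 0, ξ ≠ 0) and satisfies f(ℓ) = σ(ℓ) for all ℓ ∈ ℤ^n ∖ {0}. Then for every ℓ ∈ ℤ^n ∖ {0} and every j ∈ {1, …, n}, the rescaled first differences converge to the partial derivative of f: lim_{q → ∞, q ∈ ℕ} q (σ(qℓ + e_j) − σ(qℓ)) = ∂_j f(ℓ). -/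

import Mathlib

open scoped BigOperators

/-- The embedding of the lattice `ℤ^n` into `ℝ^n`. -/
def latt {n : ℕ} (ℓ : Fin n → ℤ) : Fin n → ℝ := fun i => (ℓ i : ℝ)

/-- The Japanese bracket `⟨ℓ⟩ = (1 + |ℓ|²)^{1/2}` of a lattice point. -/
noncomputable def jap {n : ℕ} (ℓ : Fin n → ℤ) : ℝ :=
  Real.sqrt (1 + ∑ i, (ℓ i : ℝ) ^ 2)

/-- The difference operator `Δ_j σ (ℓ) = σ(ℓ + e_j) - σ(ℓ)`. -/
def Delta {n : ℕ} (j : Fin n) (σ : (Fin n → ℤ) → ℂ) : (Fin n → ℤ) → ℂ :=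
  fun ℓ => σ (ℓ + Pi.single j 1) - σ ℓ

/-- The iterated difference operator `Δ^α = Δ_1^{α_1} ⋯ Δ_n^{α_n}`. -/
def DeltaPow {n : ℕ} (α : Fin n → ℕ) (σ : (Fin n → ℤ) → ℂ) : (Fin n → ℤ) → ℂ :=
  (List.ofFn (fun j : Fin n => (Delta j)^[α j])).foldr (· ∘ ·) id σ

/-- `σ : ℤ^n → ℂ` satisfies the toroidal symbol estimates of order `s ∈ ℝ`:
`|Δ^α σ(ℓ)| ≤ C_α ⟨ℓ⟩^{s - |α|}`. -/
def ToroidalSymbol {n : ℕ} (s : ℝ) (σ : (Fin n → ℤ) → ℂ) : Prop :=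
  ∀ α : Fin n → ℕ, ∃ C > 0, ∀ ℓ : Fin n → ℤ,
    ‖DeltaPow α σ ℓ‖ ≤ C * jap ℓ ^ (s - ∑ j, (α j : ℝ))

/-- For a toroidal symbol `σ` of order `0` which is `0`-homogeneous on the lattice, with a `C¹`
`0`-homogeneous extension `f` on `ℝ^n ∖ {0}`, the rescaled first differences
`q (σ(qℓ + e_j) - σ(qℓ))` converge to the partial derivative `∂_j f(ℓ)` as `q → ∞`. -/
theorem rescaled_differences_tendsto_deriv (n : ℕ) (hn : 1 ≤ n)
    (σ : (Fin n → ℤ) → ℂ) (hσ : ToroidalSymbol 0 σ)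
    (hhom : ∀ ℓ : Fin n → ℤ, ℓ ≠ 0 → ∀ r : ℕ, 0 < r → σ ((r : ℤ) • ℓ) = σ ℓ)
    (f : (Fin n → ℝ) → ℂ)
    (hf : ContDiffOn ℝ 1 f {ξ : Fin n → ℝ | ξ ≠ 0})
    (hfh : ∀ t : ℝ, 0 < t → ∀ ξ : Fin n → ℝ, ξ ≠ 0 → f (t • ξ) = f ξ)
    (hfσ : ∀ ℓ : Fin n → ℤ, ℓ ≠ 0 → f (latt ℓ) = σ ℓ) :
    ∀ ℓ : Fin n → ℤ, ℓ ≠ 0 → ∀ j : Fin n,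
      Filter.Tendsto
        (fun q : ℕ => (q : ℂ) * (σ ((q : ℤ) • ℓ + Pi.single j 1) - σ ((q : ℤ) • ℓ)))
        Filter.atTop (nhds (fderiv ℝ f (latt ℓ) (Pi.single j 1))) := by
  intro ℓ hℓ j
  set x : Fin n → ℝ := latt ℓ with hxdef
  set v : Fin n → ℝ := Pi.single j 1 with hvdef
  obtain ⟨i0, hi0⟩ : ∃ i, ℓ i ≠ 0 := Function.ne_iff.mp hℓ
  have hx : x ≠ 0 := by
    intro h
    apply hi0
    have := congrFun h i0
    simpa [hxdef, latt] using this
  have hopen : IsOpen {ξ : Fin n → ℝ | ξ ≠ 0} := isOpen_ne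
  have hdiff : DifferentiableAt ℝ f x :=
    (hf.contDiffAt (hopen.mem_nhds hx)).differentiableAt one_ne_zero
  -- the curve t ↦ x + t • v
  have hc : HasDerivAt (fun t : ℝ => x + t • v) v 0 := by
    have h1 : HasDerivAt (fun t : ℝ => t • v) ((1:ℝ) • v) 0 :=
      (hasDerivAt_id (0:ℝ)).smul_const v
    simpa using h1.const_add x
  have hfd : HasFDerivAt f (fderiv ℝ f x) (x + (0:ℝ) • v) := by
    simpa using hdiff.hasFDerivAt
  have hg : HasDerivAt (fun t : ℝ => f (x + t • v)) (fderiv ℝ f x v) 0 :=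
    hfd.comp_hasDerivAt 0 hc
  have hslope := hasDerivAt_iff_tendsto_slope.mp hg
  have htends : Filter.Tendsto (fun q : ℕ => 1/(q:ℝ)) Filter.atTop (nhdsWithin 0 {0}ᶜ) := by
    rw [tendsto_nhdsWithin_iff]
    constructor
    · exact tendsto_one_div_atTop_nhds_zero_nat
    · filter_upwards [Filter.eventually_ge_atTop 1] with q hq
      have : (q:ℝ) ≠ 0 := by positivity
      simp [this]
  have hcomp := hslope.comp htends
  refine hcomp.congr' ?_
  filter_upwards [Filter.eventually_ge_atTop 2] with q hq
  have hq0 : 0 < q := by omega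
  have hqR : (0:ℝ) < q := by exact_mod_cast hq0
  have hqR' : (q:ℝ) ≠ 0 := ne_of_gt hqR
  -- nonvanishing of qℓ + e_j
  have hne : (q : ℤ) • ℓ + Pi.single j 1 ≠ 0 := by
    intro h
    have hci0 := congrFun h i0
    simp only [Pi.add_apply, Pi.smul_apply, smul_eq_mul, Pi.zero_apply] at hci0
    by_cases hij : i0 = j
    · subst hij
      rw [Pi.single_eq_same] at hci0
      have habs : (2:ℤ) ≤ |(q:ℤ) * ℓ i0| := by
        rw [abs_mul]
        have h1 : (2:ℤ) ≤ |(q:ℤ)| := by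
          rw [abs_of_nonneg (by positivity)]; exact_mod_cast hq
        have h2 : (1:ℤ) ≤ |ℓ i0| := Int.one_le_abs hi0
        nlinarith
      have : (q:ℤ) * ℓ i0 = -1 := by linarith
      rw [this] at habs; norm_num at habs
    · rw [Pi.single_eq_of_ne hij] at hci0
      have : (q:ℤ) * ℓ i0 = 0 := by linarith
      rcases mul_eq_zero.mp this with h | h
      · exact hqR' (by exact_mod_cast h)
      · exact hi0 h
  -- the rescaled point
  have hw : latt ((q : ℤ) • ℓ + Pi.single j 1) = (q:ℝ) • (x + (1/(q:ℝ)) • v) := by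
    funext i
    simp only [latt, hxdef, hvdef, Pi.add_apply, Pi.smul_apply, smul_eq_mul]
    by_cases hij : i = j
    · subst hij
      rw [Pi.single_eq_same, Pi.single_eq_same]
      push_cast
      field_simp
    · rw [Pi.single_eq_of_ne hij, Pi.single_eq_of_ne hij]
      push_cast
      ring
  have hwlatt : latt ((q : ℤ) • ℓ + Pi.single j 1) ≠ 0 := by
    intro h
    apply hne
    funext i
    have := congrFun h i
    simpa [latt] using (Int.cast_injective (α := ℝ) (by simpa [latt] using this))
  have hwne : x + (1/(q:ℝ)) • v ≠ 0 := by
    intro h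
    apply hwlatt
    rw [hw, h, smul_zero]
  -- σ(qℓ + e_j) = f(x + (1/q) v)
  have e1 : σ ((q : ℤ) • ℓ + Pi.single j 1) = f (x + (1/(q:ℝ)) • v) := by
    rw [← hfσ _ hne, hw, hfh (q:ℝ) hqR _ hwne]
  -- σ(qℓ) = f x
  have e2 : σ ((q : ℤ) • ℓ) = f x := by
    rw [hhom ℓ hℓ q hq0, ← hfσ ℓ hℓ]
  show (slope (fun t : ℝ => f (x + t • v)) 0 ∘ fun q : ℕ => 1/(q:ℝ)) q
      = (q:ℂ) * (σ ((q : ℤ) • ℓ + Pi.single j 1) - σ ((q : ℤ) • ℓ))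
  rw [Function.comp_apply, e1, e2, slope_def_module]
  simp only [sub_zero, zero_smul, add_zero, one_div, inv_inv]
  rw [Complex.real_smul]
  push_cast
  ring
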